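/- Let F : ℝ^p → ℝ^p be monotone and L-Lipschitz, T maximally 3-cyclically monotone, and let (x^k, y^k) be generated by y^k := J_{ηT}(x^k - η u^k), x^{k+1} := J_{ηT}(x^k - η Fy^k) (β = 1) with ‖Fx^k - u^k‖² ≤ κ₁‖Fx^k - Fy^{k-1}‖² for κ₁ ≥ 0, and stepsize 0 < η < 1/((1+r)L) where r := (κ₁ + √(κ₁² + 4κ₁))/2. Define w^k := Fx^k + ξ^k with ξ^k ∈ Tx^k given by the resolvent. Then, with s := ((1+r)² - 2κ₁ - 1 + √(((1+r)² - 2κ₁ - 1)² - 4κ₁(1+κ₁)))/(2(1+κ₁)) and ω := κ₁(s + (1+s)L²η²)/(s - (1+s)κ₁L²η²), the sequence k ↦ ‖w^k‖² + ω‖Fx^k - Fy^{k-1}‖² is nonincreasing. -/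

import Mathlib

open scoped RealInnerProductSpace

theorem geg2_aux_step {p : ℕ} (ω c : ℝ) (hω1 : 0 ≤ 1 + ω)
    (g0 g1 gy u0 d e w0 w1 : EuclideanSpace ℝ (Fin p)) (P : ℝ)
    (hw1 : w1 = (g1 - gy) + d)
    (hA1 : ⟪g1 - g0, d⟫ ≤ 0)
    (hA2 : 0 ≤ ⟪w0 - g0, e⟫ + ⟪e - u0, d - e⟫ - ⟪d - gy, d⟫)
    (hQ : ‖g1 - gy‖ ^ 2 ≤ c * ‖e - d‖ ^ 2)
    (hM : 2 * ‖g0 - u0‖ * ‖e - d‖ + (1 + ω) * (c * ‖e - d‖ ^ 2) ≤ ω * P + ‖e - d‖ ^ 2) :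
    ‖w1‖ ^ 2 + ω * ‖g1 - gy‖ ^ 2 ≤ ‖w0‖ ^ 2 + ω * P := by
  have e1 : ‖w1‖ ^ 2 = ‖g1 - gy‖ ^ 2 + 2 * ⟪g1 - gy, d⟫ + ‖d‖ ^ 2 := by
    rw [hw1]; exact norm_add_sq_real _ _
  have e2 : ‖e - d‖ ^ 2 = ‖e‖ ^ 2 - 2 * ⟪e, d⟫ + ‖d‖ ^ 2 := norm_sub_sq_real e d
  have e3 : ‖w0 - e‖ ^ 2 = ‖w0‖ ^ 2 - 2 * ⟪w0, e⟫ + ‖e‖ ^ 2 := norm_sub_sq_real w0 e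
  have e4 : (0:ℝ) ≤ ‖w0 - e‖ ^ 2 := by positivity
  have x1 : ⟪g1 - gy, d⟫ = ⟪g1, d⟫ - ⟪gy, d⟫ := inner_sub_left _ _ _
  have x2 : ⟪g1 - g0, d⟫ = ⟪g1, d⟫ - ⟪g0, d⟫ := inner_sub_left _ _ _
  have x3 : ⟪w0 - g0, e⟫ = ⟪w0, e⟫ - ⟪g0, e⟫ := inner_sub_left _ _ _
  have x4 : ⟪e - u0, d - e⟫ = ⟪e, d⟫ - ‖e‖ ^ 2 - ⟪u0, d⟫ + ⟪u0, e⟫ := by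
    simp only [inner_sub_left, inner_sub_right, real_inner_self_eq_norm_sq]; ring
  have x5 : ⟪d - gy, d⟫ = ‖d‖ ^ 2 - ⟪gy, d⟫ := by
    simp only [inner_sub_left, real_inner_self_eq_norm_sq]
  have x6 : ⟪g0 - u0, d - e⟫ = ⟪g0, d⟫ - ⟪g0, e⟫ - ⟪u0, d⟫ + ⟪u0, e⟫ := by
    simp only [inner_sub_left, inner_sub_right]; ring
  have cs : ⟪g0 - u0, d - e⟫ ≤ ‖g0 - u0‖ * ‖e - d‖ := by
    have h := real_inner_le_norm (g0 - u0) (d - e)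
    rwa [norm_sub_rev d e] at h
  have hQmul : (1 + ω) * ‖g1 - gy‖ ^ 2 ≤ (1 + ω) * (c * ‖e - d‖ ^ 2) :=
    mul_le_mul_of_nonneg_left hQ hω1
  linarith [e1, e2, e3, e4, x1, x2, x3, x4, x5, x6, cs, hA1, hA2, hQmul, hM]

set_option maxHeartbeats 2000000 in
theorem geg2_last_iterate_monotone {p : ℕ}
    (F : EuclideanSpace ℝ (Fin p) → EuclideanSpace ℝ (Fin p))
    (hmono : ∀ a b, 0 ≤ ⟪F a - F b, a - b⟫)
    (L : ℝ) (hL0 : 0 < L) (hL : ∀ a b, ‖F a - F b‖ ≤ L * ‖a - b‖)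
    (T : EuclideanSpace ℝ (Fin p) → Set (EuclideanSpace ℝ (Fin p)))
    (hT3 : ∀ x₁ u₁ x₂ u₂ x₃ u₃, u₁ ∈ T x₁ → u₂ ∈ T x₂ → u₃ ∈ T x₃ →
      0 ≤ ⟪u₁, x₁ - x₂⟫ + ⟪u₂, x₂ - x₃⟫ + ⟪u₃, x₃ - x₁⟫)
    (κ₁ r : ℝ) (hκ₁ : 0 ≤ κ₁)
    (hr : r = (κ₁ + Real.sqrt (κ₁ ^ 2 + 4 * κ₁)) / 2)
    (η : ℝ) (hη₀ : 0 < η) (hη₁ : η < 1 / ((1 + r) * L))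
    (x y u ζ ξ : ℕ → EuclideanSpace ℝ (Fin p))
    (hζ : ∀ k, ζ k ∈ T (y k))
    (hξ : ∀ k, ξ (k + 1) ∈ T (x (k + 1)))
    (hy : ∀ k, y k = x k - η • (u k + ζ k))
    (hx : ∀ k, x (k + 1) = x k - η • (F (y k) + ξ (k + 1)))
    (hu : ∀ k, ‖F (x (k + 1)) - u (k + 1)‖ ^ 2 ≤ κ₁ * ‖F (x (k + 1)) - F (y k)‖ ^ 2)
    (s ω : ℝ)
    (hs : s = ((1 + r) ^ 2 - 2 * κ₁ - 1 +
      Real.sqrt (((1 + r) ^ 2 - 2 * κ₁ - 1) ^ 2 - 4 * κ₁ * (1 + κ₁))) / (2 * (1 + κ₁)))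
    (hω : ω = κ₁ * (s + (1 + s) * L ^ 2 * η ^ 2) / (s - (1 + s) * κ₁ * L ^ 2 * η ^ 2)) :
    Antitone (fun k : ℕ =>
      ‖F (x (k + 1)) + ξ (k + 1)‖ ^ 2 + ω * ‖F (x (k + 1)) - F (y k)‖ ^ 2) := by
  -- basic scalar facts about r
  have ht0 : 0 ≤ Real.sqrt (κ₁ ^ 2 + 4 * κ₁) := Real.sqrt_nonneg _
  have ht2 : Real.sqrt (κ₁ ^ 2 + 4 * κ₁) ^ 2 = κ₁ ^ 2 + 4 * κ₁ :=
    Real.sq_sqrt (by positivity)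
  have hr0 : 0 ≤ r := by rw [hr]; linarith
  have hr2 : r ^ 2 = κ₁ * (1 + r) := by rw [hr]; linear_combination (1/4) * ht2
  -- s = r
  have hsr : s = r := by
    have hA : ((1 + r) ^ 2 - 2 * κ₁ - 1) ^ 2 - 4 * κ₁ * (1 + κ₁) = (κ₁ * (1 + r)) ^ 2 := by
      linear_combination (4 + κ₁ + 4*r + κ₁*r + r^2) * hr2
    have hs2 : Real.sqrt (((1 + r) ^ 2 - 2 * κ₁ - 1) ^ 2 - 4 * κ₁ * (1 + κ₁))
        = κ₁ * (1 + r) := by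
      rw [hA]; exact Real.sqrt_sq (by positivity)
    have h1κ : (0:ℝ) < 1 + κ₁ := by linarith
    rw [hs, hs2]
    field_simp
    linear_combination hr2
  subst hsr
  -- the stepsize quantity
  obtain ⟨c, hcdef⟩ : ∃ c : ℝ, c = L ^ 2 * η ^ 2 := ⟨_, rfl⟩
  have hc0 : 0 < c := by rw [hcdef]; positivity
  have hrLpos : 0 < (1 + s) * L := by
    have : (0:ℝ) < 1 + s := by linarith
    positivity
  have hηL : η * ((1 + s) * L) < 1 := (lt_div_iff₀ hrLpos).mp hη₁
  have hc1 : (1 + s) ^ 2 * c < 1 := by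
    rw [hcdef]
    nlinarith [hηL, mul_pos hη₀ hrLpos]
  -- core scalar facts: ω ≥ 0 and the master inequality
  have hcore : 0 ≤ ω ∧ ∀ X Y P' : ℝ, 0 ≤ X → 0 ≤ Y → 0 ≤ P' → X ^ 2 ≤ κ₁ * P' →
      2 * X * Y + (1 + ω) * (c * Y ^ 2) ≤ ω * P' + Y ^ 2 := by
    rcases eq_or_lt_of_le hκ₁ with hκeq | hκpos
    · -- κ₁ = 0
      have hωz : ω = 0 := by rw [hω, ← hκeq]; simp
      have hcle : c < 1 := by nlinarith [hc1, hr0, hc0]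
      refine ⟨by rw [hωz], fun X Y P' hX hY hP hXP => ?_⟩
      have hX0 : X = 0 := by nlinarith [hXP, hX]
      rw [hωz, hX0]
      nlinarith [sq_nonneg Y, hcle]
    · -- κ₁ > 0
      have hrpos : 0 < s := by
        nlinarith [hr2, hκpos, hr0]
      have hDpos : 0 < s * (1 - s * c) := by
        have hsc : s * c < 1 := by nlinarith [hc1, hc0, hrpos, mul_pos hrpos hc0]
        have : 0 < 1 - s * c := by linarith
        positivity
      have hnum : κ₁ * (s + (1 + s) * L ^ 2 * η ^ 2) = κ₁ * (s + (1 + s) * c) := by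
        rw [hcdef]; ring
      have hden : s - (1 + s) * κ₁ * L ^ 2 * η ^ 2 = s * (1 - s * c) := by
        rw [hcdef]; linear_combination (L ^ 2 * η ^ 2) * hr2
      have hωeq : ω = κ₁ * (s + (1 + s) * c) / (s * (1 - s * c)) := by
        rw [hω, hnum, hden]
      have hNpos : 0 < κ₁ * (s + (1 + s) * c) := by
        have : 0 < s + (1 + s) * c := by nlinarith [hrpos, hc0]
        positivity
      have hωpos : 0 < ω := by rw [hωeq]; exact div_pos hNpos hDpos
      have hωD : ω * (s * (1 - s * c)) = κ₁ * (s + (1 + s) * c) := by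
        rw [hωeq]; field_simp
        have h1sc : 0 < 1 - s * c := by nlinarith [hc1, hc0, hrpos, mul_pos hrpos hc0]
        exact div_self h1sc.ne'
      -- key inequality
      have hid : (1 + s) ^ 2 *
          ((κ₁ * (s + (1 + s) * c)) * (s * (1 - s * c)) * (1 - c)
            - κ₁ * (s * (1 - s * c)) ^ 2 - (κ₁ * (s + (1 + s) * c)) ^ 2 * c)
          = s ^ 3 * c * (1 + s + s ^ 2) * (1 - (1 + s) ^ 2 * c) := by
        linear_combination (κ₁*c^3 - s*c + s*c^2 + 2*κ₁*s*c^2 + 3*κ₁*s*c^3 - s^2*c + κ₁*s^2*c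
          + 3*s^2*c^2 + 4*κ₁*s^2*c^2 + 3*κ₁*s^2*c^3 - s^3*c + κ₁*s^3*c + 4*s^3*c^2
          + 2*κ₁*s^3*c^2 + κ₁*s^3*c^3 + 3*s^4*c^2 + s^5*c^2) * hr2
      have hpos : 0 ≤ s ^ 3 * c * (1 + s + s ^ 2) * (1 - (1 + s) ^ 2 * c) := by
        have : 0 ≤ 1 - (1 + s) ^ 2 * c := by linarith
        positivity
      have hpoly : κ₁ * (s * (1 - s * c)) ^ 2 + (κ₁ * (s + (1 + s) * c)) ^ 2 * c
          ≤ (κ₁ * (s + (1 + s) * c)) * (s * (1 - s * c)) * (1 - c) := by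
        nlinarith [hid, hpos, sq_nonneg (1 + s)]
      rw [← hωD] at hpoly
      have hkey : κ₁ + ω ^ 2 * c ≤ ω * (1 - c) := by
        nlinarith [hpoly, hDpos, mul_pos hDpos hDpos]
      refine ⟨hωpos.le, fun X Y P' hX hY hP hXP => ?_⟩
      have t1 : 2 * X * Y * (κ₁ * ω) ≤ ω ^ 2 * X ^ 2 + κ₁ ^ 2 * Y ^ 2 := by
        nlinarith [sq_nonneg (ω * X - κ₁ * Y)]
      have t2 : ω ^ 2 * X ^ 2 ≤ ω ^ 2 * (κ₁ * P') :=
        mul_le_mul_of_nonneg_left hXP (sq_nonneg ω)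
      have t3 : (κ₁ * Y ^ 2) * (κ₁ + ω ^ 2 * c) ≤ (κ₁ * Y ^ 2) * (ω * (1 - c)) :=
        mul_le_mul_of_nonneg_left hkey (by positivity)
      nlinarith [t1, t2, t3, mul_pos hκpos hωpos]
  obtain ⟨hωnn, hmaster⟩ := hcore
  -- the monotone decrease, step by step
  apply antitone_nat_of_succ_le
  intro k
  refine geg2_aux_step ω c (by linarith)
    (F (x (k + 1))) (F (x (k + 1 + 1))) (F (y (k + 1))) (u (k + 1))
    (F (y (k + 1)) + ξ (k + 1 + 1)) (u (k + 1) + ζ (k + 1))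
    (F (x (k + 1)) + ξ (k + 1)) (F (x (k + 1 + 1)) + ξ (k + 1 + 1))
    (‖F (x (k + 1)) - F (y k)‖ ^ 2) (by abel) ?_ ?_ ?_ ?_
  · -- monotonicity of F
    have hmo := hmono (x (k + 1 + 1)) (x (k + 1))
    have hv : x (k + 1 + 1) - x (k + 1) = (-η) • (F (y (k + 1)) + ξ (k + 1 + 1)) := by
      rw [hx (k + 1), neg_smul]; abel
    rw [hv, real_inner_smul_right] at hmo
    nlinarith [hmo, hη₀]
  · -- 3-cyclic monotonicity of T
    have h3 := hT3 (x (k + 1)) (ξ (k + 1)) (y (k + 1)) (ζ (k + 1)) (x (k + 1 + 1))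
      (ξ (k + 1 + 1)) (hξ k) (hζ (k + 1)) (hξ (k + 1))
    have hv1 : x (k + 1) - y (k + 1) = η • (u (k + 1) + ζ (k + 1)) := by
      rw [hy (k + 1)]; abel
    have hv3 : x (k + 1 + 1) - x (k + 1) = (-η) • (F (y (k + 1)) + ξ (k + 1 + 1)) := by
      rw [hx (k + 1), neg_smul]; abel
    have hv2 : y (k + 1) - x (k + 1 + 1)
        = η • ((F (y (k + 1)) + ξ (k + 1 + 1)) - (u (k + 1) + ζ (k + 1))) := by
      calc y (k + 1) - x (k + 1 + 1)
          = -(x (k + 1) - y (k + 1)) - (x (k + 1 + 1) - x (k + 1)) := by abel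
        _ = -(η • (u (k + 1) + ζ (k + 1))) - (-η) • (F (y (k + 1)) + ξ (k + 1 + 1)) := by
            rw [hv1, hv3]
        _ = η • ((F (y (k + 1)) + ξ (k + 1 + 1)) - (u (k + 1) + ζ (k + 1))) := by
            rw [neg_smul, smul_sub]; abel
    rw [hv1, hv2, hv3] at h3
    simp only [real_inner_smul_right] at h3
    have hw0g : (F (x (k + 1)) + ξ (k + 1)) - F (x (k + 1)) = ξ (k + 1) := by abel
    have heu : (u (k + 1) + ζ (k + 1)) - u (k + 1) = ζ (k + 1) := by abel
    have hdg : (F (y (k + 1)) + ξ (k + 1 + 1)) - F (y (k + 1)) = ξ (k + 1 + 1) := by abel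
    rw [hw0g, hdg, heu]
    nlinarith [h3, hη₀]
  · -- Lipschitz bound
    have hlip := hL (x (k + 1 + 1)) (y (k + 1))
    have hv1 : x (k + 1) - y (k + 1) = η • (u (k + 1) + ζ (k + 1)) := by
      rw [hy (k + 1)]; abel
    have hv3 : x (k + 1 + 1) - x (k + 1) = (-η) • (F (y (k + 1)) + ξ (k + 1 + 1)) := by
      rw [hx (k + 1), neg_smul]; abel
    have hv4 : x (k + 1 + 1) - y (k + 1)
        = η • ((u (k + 1) + ζ (k + 1)) - (F (y (k + 1)) + ξ (k + 1 + 1))) := by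
      calc x (k + 1 + 1) - y (k + 1)
          = (x (k + 1 + 1) - x (k + 1)) + (x (k + 1) - y (k + 1)) := by abel
        _ = (-η) • (F (y (k + 1)) + ξ (k + 1 + 1)) + η • (u (k + 1) + ζ (k + 1)) := by
            rw [hv1, hv3]
        _ = η • ((u (k + 1) + ζ (k + 1)) - (F (y (k + 1)) + ξ (k + 1 + 1))) := by
            rw [neg_smul, smul_sub]; abel
    rw [hv4, norm_smul, Real.norm_eq_abs, abs_of_pos hη₀] at hlip
    rw [hcdef]
    nlinarith [hlip, norm_nonneg (F (x (k + 1 + 1)) - F (y (k + 1))),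
      norm_nonneg ((u (k + 1) + ζ (k + 1)) - (F (y (k + 1)) + ξ (k + 1 + 1))),
      mul_nonneg hL0.le hη₀.le, hL0, hη₀]
  · -- master inequality applied
    exact hmaster _ _ _ (norm_nonneg _) (norm_nonneg _) (by positivity) (hu k)
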